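/- The function G(M) = (1 + 2(2·arcsin(1/(2M))/π)^{2/3} + 2(2·arcsin(1/(2M))/π)^{4/3})² · 9M²/(16(M² - 1/4)) is decreasing for M ≥ 15, and G(15) ≤ 1. Consequently G(M) ≤ 1 for all M ≥ 15. -/

import Mathlib

open Real

private lemma rpow23_le {x c : ℝ} (hx : 0 ≤ x) (hc : 0 ≤ c) (h : x^2 ≤ c^3) :
    x ^ ((2:ℝ)/3) ≤ c := by
  have hx23 : x ^ ((2:ℝ)/3) = (x^2) ^ ((1:ℝ)/3) := by
    rw [← Real.rpow_natCast x 2, ← Real.rpow_mul hx]; norm_num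
  rw [hx23]
  calc (x^2) ^ ((1:ℝ)/3) ≤ (c^3) ^ ((1:ℝ)/3) :=
        Real.rpow_le_rpow (by positivity) h (by norm_num)
    _ = c := by rw [← Real.rpow_natCast c 3, ← Real.rpow_mul hc]; norm_num

private lemma rpow43_eq {x : ℝ} (hx : 0 ≤ x) :
    x ^ ((4:ℝ)/3) = (x ^ ((2:ℝ)/3))^2 := by
  rw [← Real.rpow_natCast (x ^ ((2:ℝ)/3)) 2, ← Real.rpow_mul hx]
  norm_num

set_option maxHeartbeats 1600000 in
theorem tall_triangle_bound :
    let G : ℝ → ℝ := fun M =>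
      (1 + 2*(2*Real.arcsin (1/(2*M))/π)^((2:ℝ)/3)
         + 2*(2*Real.arcsin (1/(2*M))/π)^((4:ℝ)/3))^2 * (9*M^2/(16*(M^2 - 1/4)))
    AntitoneOn G (Set.Ici 15) ∧ G 15 ≤ 1 ∧ ∀ M : ℝ, 15 ≤ M → G M ≤ 1 := by
  intro G
  have hpi : (3:ℝ) ≤ π := Real.pi_gt_three.le
  have hpi0 : (0:ℝ) < π := Real.pi_pos
  -- Antitone part
  have h1 : AntitoneOn G (Set.Ici 15) := by
    intro a ha b hb hab
    simp only [Set.mem_Ici] at ha hb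
    have ha0 : (0:ℝ) < a := by linarith
    have hb0 : (0:ℝ) < b := by linarith
    set xa := 2*Real.arcsin (1/(2*a))/π with hxa
    set xb := 2*Real.arcsin (1/(2*b))/π with hxb
    have hinv : 1/(2*b) ≤ 1/(2*a) := by
      rw [div_le_div_iff₀ (by linarith) (by linarith)]; nlinarith
    have harc : Real.arcsin (1/(2*b)) ≤ Real.arcsin (1/(2*a)) :=
      Real.monotone_arcsin hinv
    have harcb0 : 0 ≤ Real.arcsin (1/(2*b)) :=
      Real.arcsin_nonneg.2 (by positivity)
    have hxb0 : 0 ≤ xb := by rw [hxb]; positivity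
    have hxle : xb ≤ xa := by
      rw [hxa, hxb]; gcongr
    have h23 : xb ^ ((2:ℝ)/3) ≤ xa ^ ((2:ℝ)/3) :=
      Real.rpow_le_rpow hxb0 hxle (by norm_num)
    have h43 : xb ^ ((4:ℝ)/3) ≤ xa ^ ((4:ℝ)/3) :=
      Real.rpow_le_rpow hxb0 hxle (by norm_num)
    have h23b : 0 ≤ xb ^ ((2:ℝ)/3) := Real.rpow_nonneg hxb0 _
    have h43b : 0 ≤ xb ^ ((4:ℝ)/3) := Real.rpow_nonneg hxb0 _
    have hAle : 1 + 2*xb^((2:ℝ)/3) + 2*xb^((4:ℝ)/3)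
        ≤ 1 + 2*xa^((2:ℝ)/3) + 2*xa^((4:ℝ)/3) := by linarith
    have hAb0 : 0 ≤ 1 + 2*xb^((2:ℝ)/3) + 2*xb^((4:ℝ)/3) := by linarith
    have hBle : 9*b^2/(16*(b^2 - 1/4)) ≤ 9*a^2/(16*(a^2 - 1/4)) := by
      rw [div_le_div_iff₀ (by nlinarith) (by nlinarith)]
      nlinarith
    have hBb0 : 0 ≤ 9*b^2/(16*(b^2 - 1/4)) := by
      apply div_nonneg (by positivity); nlinarith
    show (1 + 2*xb^((2:ℝ)/3) + 2*xb^((4:ℝ)/3))^2 * (9*b^2/(16*(b^2 - 1/4)))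
        ≤ (1 + 2*xa^((2:ℝ)/3) + 2*xa^((4:ℝ)/3))^2 * (9*a^2/(16*(a^2 - 1/4)))
    have hsq : (1 + 2*xb^((2:ℝ)/3) + 2*xb^((4:ℝ)/3))^2
        ≤ (1 + 2*xa^((2:ℝ)/3) + 2*xa^((4:ℝ)/3))^2 := by
      apply pow_le_pow_left₀ hAb0 hAle
    exact mul_le_mul hsq hBle hBb0 (by positivity)
  -- Value at 15
  have h2 : G 15 ≤ 1 := by
    have harg : (1:ℝ)/(2*15) = 1/30 := by norm_num
    have ht0 : 0 ≤ Real.arcsin (1/30) := Real.arcsin_nonneg.2 (by norm_num)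
    have ht : Real.arcsin (1/30) ≤ 1/15 := by
      rw [Real.arcsin_le_iff_le_sin (by constructor <;> norm_num)
        (by constructor <;> [linarith; linarith])]
      have := Real.sin_gt_sub_cube (x := 1/15) (by norm_num)
      nlinarith
    set x := 2*Real.arcsin (1/(2*15))/π with hxdef
    have ht0' : 0 ≤ Real.arcsin (1/(2*15)) := by rw [harg]; exact ht0
    have hx0 : 0 ≤ x := by
      rw [hxdef]; exact div_nonneg (by linarith) hpi0.le
    have hxle : x ≤ 2/45 := by
      rw [hxdef, harg]
      calc 2*Real.arcsin (1/30)/π ≤ 2*(1/15)/3 := by gcongr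
        _ = 2/45 := by norm_num
    have h23 : x ^ ((2:ℝ)/3) ≤ 63/500 := by
      apply rpow23_le hx0 (by norm_num)
      nlinarith
    have h23b : 0 ≤ x ^ ((2:ℝ)/3) := Real.rpow_nonneg hx0 _
    have h43 : x ^ ((4:ℝ)/3) ≤ (63/500)^2 := by
      rw [rpow43_eq hx0]
      apply pow_le_pow_left₀ h23b h23
    have h43b : 0 ≤ x ^ ((4:ℝ)/3) := Real.rpow_nonneg hx0 _
    show (1 + 2*x^((2:ℝ)/3) + 2*x^((4:ℝ)/3))^2 * (9*(15:ℝ)^2/(16*((15:ℝ)^2 - 1/4))) ≤ 1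
    have hB : (9*(15:ℝ)^2/(16*((15:ℝ)^2 - 1/4))) = 2025/3596 := by norm_num
    rw [hB]
    have hA : 1 + 2*x^((2:ℝ)/3) + 2*x^((4:ℝ)/3) ≤ 160469/125000 := by nlinarith
    have hA0 : (0:ℝ) ≤ 1 + 2*x^((2:ℝ)/3) + 2*x^((4:ℝ)/3) := by linarith
    calc (1 + 2*x^((2:ℝ)/3) + 2*x^((4:ℝ)/3))^2 * (2025/3596)
        ≤ ((160469:ℝ)/125000)^2 * (2025/3596) :=
          mul_le_mul_of_nonneg_right (pow_le_pow_left₀ hA0 hA 2) (by norm_num)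
      _ ≤ 1 := by norm_num
  refine ⟨h1, h2, fun M hM => ?_⟩
  exact le_trans (h1 (by norm_num) hM hM) h2
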